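/- Let w be a connected positive weight on n vertices and A(w) its weight matrix. If r, s : Fin n → ℝ both satisfy (A(w))ᵀ *ᵥ r = 0 and (A(w))ᵀ *ᵥ s = 0, then r and s are linearly dependent. Equivalently, the left kernel of A(w) is at most one-dimensional. -/

import Mathlib

open Matrix Finset

/-- The weight matrix `A(w)`: off-diagonal entries `w i j`, diagonal entry
`-(∑ j ≠ i, w i j)`. -/
def weightMatrix {n : ℕ} (w : Fin n → Fin n → ℝ) : Matrix (Fin n) (Fin n) ℝ :=
  Matrix.of fun i j => if i = j then -(∑ k ∈ Finset.univ.erase i, w i k) else w i j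

/-- A connected positive weight on `n` vertices. -/
def IsConnPosWeight {n : ℕ} (w : Fin n → Fin n → ℝ) : Prop :=
  (∀ i, w i i = 0) ∧ (∀ i j, 0 ≤ w i j) ∧
  (∀ i j : Fin n, i ≠ j → (0 < w i j ↔ 0 < w j i)) ∧
  (SimpleGraph.fromRel fun i j : Fin n => 0 < w i j).Connected

/-- Maximum principle: any vector in the (right) kernel of `A(w)` is constant. -/
lemma weightMatrix_kernel_const {n : ℕ} (w : Fin n → Fin n → ℝ)
    (hw : IsConnPosWeight w) (q : Fin n → ℝ) (hq : weightMatrix w *ᵥ q = 0) :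
    ∀ i j, q i = q j := by
  obtain ⟨hdiag, hnonneg, hsymm, hconn⟩ := hw
  have : Nonempty (Fin n) := hconn.nonempty
  obtain ⟨i0, hi0⟩ := Finite.exists_max q
  -- key step: if `q i` is the global max and `w i j > 0` then `q j = q i`
  have key : ∀ i j : Fin n, q i = q i0 → 0 < w i j → q j = q i := by
    intro i j hmax hpos
    have hrow : ∑ k ∈ Finset.univ.erase i, w i k * (q i - q k) = 0 := by
      have h0 : (weightMatrix w *ᵥ q) i = 0 := by rw [hq]; rfl
      have : ∑ k, weightMatrix w i k * q k = 0 := h0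
      rw [← Finset.add_sum_erase _ _ (Finset.mem_univ i)] at this
      have hdiag' : weightMatrix w i i = -(∑ k ∈ Finset.univ.erase i, w i k) := by
        simp [weightMatrix]
      have hoff : ∀ k ∈ Finset.univ.erase i, weightMatrix w i k * q k = w i k * q k := by
        intro k hk
        have hki : k ≠ i := Finset.ne_of_mem_erase hk
        simp [weightMatrix, (Ne.symm hki)]
      rw [Finset.sum_congr rfl hoff, hdiag'] at this
      have : ∑ k ∈ Finset.univ.erase i, w i k * q k
          = (∑ k ∈ Finset.univ.erase i, w i k) * q i := by linarith
      rw [Finset.sum_mul] at this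
      calc ∑ k ∈ Finset.univ.erase i, w i k * (q i - q k)
          = ∑ k ∈ Finset.univ.erase i, (w i k * q i - w i k * q k) := by
            apply Finset.sum_congr rfl; intro k _; ring
        _ = 0 := by rw [Finset.sum_sub_distrib, this]; ring
    have hterm : ∀ k ∈ Finset.univ.erase i, 0 ≤ w i k * (q i - q k) := by
      intro k _
      have : q k ≤ q i := hmax ▸ hi0 k
      exact mul_nonneg (hnonneg i k) (by linarith)
    have hij : i ≠ j := by
      intro h; rw [h] at hpos; simp [hdiag j] at hpos
    have hj : w i j * (q i - q j) = 0 :=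
      (Finset.sum_eq_zero_iff_of_nonneg hterm).mp hrow j
        (Finset.mem_erase.mpr ⟨Ne.symm hij, Finset.mem_univ j⟩)
    rcases mul_eq_zero.mp hj with h | h
    · exact absurd h (ne_of_gt hpos)
    · linarith
  -- propagate along walks from i0
  have prop : ∀ a b : Fin n,
      (SimpleGraph.fromRel fun i j : Fin n => 0 < w i j).Walk a b →
      q a = q i0 → q b = q i0 := by
    intro a b p
    induction p with
    | nil => exact id
    | @cons a c b hadj p ih =>
      intro ha
      obtain ⟨hne, hpos⟩ := hadj
      have hpos' : 0 < w a c := by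
        rcases hpos with h | h
        · exact h
        · exact (hsymm a c hne).mpr h
      have : q c = q a := key a c ha hpos'
      exact ih (this.trans ha)
  have all_eq : ∀ i : Fin n, q i = q i0 := fun i =>
    prop i0 i (hconn i0 i).some rfl
  intro i j; rw [all_eq i, all_eq j]

/-- The left kernel of `A(w)` is at most one-dimensional: any two vectors in the kernel of
`A(w)ᵀ` are linearly dependent. -/
theorem stmt_4 {n : ℕ} (hn : 2 ≤ n) (w : Fin n → Fin n → ℝ)
    (hw : IsConnPosWeight w) (r s : Fin n → ℝ)
    (hr : (weightMatrix w)ᵀ *ᵥ r = 0) (hs : (weightMatrix w)ᵀ *ᵥ s = 0) :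
    ¬ LinearIndependent ℝ ![r, s] := by
  intro hind
  set A := weightMatrix w with hA
  -- right kernel is contained in the span of the constant vector 1
  have hker_le : LinearMap.ker A.mulVecLin ≤
      Submodule.span ℝ {(fun _ => (1 : ℝ) : Fin n → ℝ)} := by
    intro q hq
    have hq' : A *ᵥ q = 0 := hq
    have : Nonempty (Fin n) := ⟨⟨0, by omega⟩⟩
    obtain ⟨i0⟩ := this
    have hconst := weightMatrix_kernel_const w hw q hq'
    have : q = (q i0) • (fun _ => (1 : ℝ)) := by
      funext j; simp [hconst j i0]
    rw [this]
    exact Submodule.smul_mem _ _ (Submodule.mem_span_singleton_self _)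
  have hker_fin : Module.finrank ℝ (LinearMap.ker A.mulVecLin) ≤ 1 := by
    calc Module.finrank ℝ (LinearMap.ker A.mulVecLin)
        ≤ Module.finrank ℝ (Submodule.span ℝ {(fun _ => (1 : ℝ) : Fin n → ℝ)}) :=
          Submodule.finrank_mono hker_le
      _ ≤ 1 := by simpa using finrank_span_le_card ({(fun _ => (1 : ℝ) : Fin n → ℝ)} : Set (Fin n → ℝ))
  -- rank-nullity for A and Aᵀ, plus rank Aᵀ = rank A
  have h1 := LinearMap.finrank_range_add_finrank_ker A.mulVecLin
  have h2 := LinearMap.finrank_range_add_finrank_ker Aᵀ.mulVecLin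
  rw [Module.finrank_pi] at h1 h2
  have hrank : Aᵀ.rank = A.rank := Matrix.rank_transpose A
  have hkerT : Module.finrank ℝ (LinearMap.ker Aᵀ.mulVecLin) ≤ 1 := by
    have : Module.finrank ℝ (LinearMap.ker Aᵀ.mulVecLin)
        = Module.finrank ℝ (LinearMap.ker A.mulVecLin) := by
      unfold Matrix.rank at hrank
      omega
    omega
  -- r, s lie in ker Aᵀ, and are independent there, contradiction
  have hrmem : r ∈ LinearMap.ker Aᵀ.mulVecLin := by
    simp only [LinearMap.mem_ker, Matrix.mulVecLin_apply]; exact hr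
  have hsmem : s ∈ LinearMap.ker Aᵀ.mulVecLin := by
    simp only [LinearMap.mem_ker, Matrix.mulVecLin_apply]; exact hs
  set K := LinearMap.ker Aᵀ.mulVecLin
  have hind' : LinearIndependent ℝ ![(⟨r, hrmem⟩ : K), ⟨s, hsmem⟩] := by
    apply LinearIndependent.of_comp K.subtype
    convert hind
    funext i
    fin_cases i <;> rfl
    rfl
  have := hind'.fintype_card_le_finrank
  simp [Fintype.card_fin] at this
  omega
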